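/- Second-order bias bound for the doubly robust functional: let δ ∈ (0, 1/2], let p₀(x) := ℙ(R = true | X = x) ∈ [δ, 1 − δ] and e₀(x) := ℙ(A = a | X = x, R = true) ≥ δ for all x in the support of X, and let g₀(x) := E[Y | X = x, A = a, R = true]. There exists a constant C, depending only on δ and ℙ(R = false), such that for all functions g : 𝒳 → ℝ, p : 𝒳 → [δ, 1 − δ], e : 𝒳 → [δ, 1], |Φ(g, e, p) − ψ| ≤ C · ‖g − g₀‖₂ · (‖p − p₀‖₂ + ‖e − e₀‖₂), where ‖f‖₂ := (E[f(X)²])^{1/2}, ψ := Σ_x ℙ(X = x | R = false)·E[Y | X = x, A = a, R = true], and Φ(g, e, p) := (1/ℙ(R = false))·E[ ((1 − p(X))·1{R = true, A = a}/(e(X)·p(X)))·(Y − g(X)) + 1{R = false}·g(X) ]. -/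

import Mathlib

open Finset

attribute [local instance] Classical.propDecidable

variable {Ω : Type*}

/-- Probability of an event. -/
noncomputable def pr [Fintype Ω] (P : Ω → ℝ) (E : Ω → Prop) : ℝ :=
  ∑ ω, if E ω then P ω else 0

/-- Expectation of a real random variable. -/
noncomputable def ex [Fintype Ω] (P : Ω → ℝ) (Z : Ω → ℝ) : ℝ :=
  ∑ ω, P ω * Z ω

/-- Conditional probability ℙ(F | E) = ℙ(F ∩ E)/ℙ(E). -/
noncomputable def cpr [Fintype Ω] (P : Ω → ℝ) (F E : Ω → Prop) : ℝ :=
  pr P (fun ω => F ω ∧ E ω) / pr P E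

/-- Conditional expectation E[Z | E] = E[Z·1_E]/ℙ(E). -/
noncomputable def cex [Fintype Ω] (P : Ω → ℝ) (Z : Ω → ℝ) (E : Ω → Prop) : ℝ :=
  (∑ ω, if E ω then P ω * Z ω else 0) / pr P E

lemma pr_nonneg [Fintype Ω] (P : Ω → ℝ) (hP0 : ∀ ω, 0 ≤ P ω) (E : Ω → Prop) :
    0 ≤ pr P E :=
  Finset.sum_nonneg fun ω _ => by by_cases h : E ω <;> simp [h, hP0 ω]

lemma pr_mono [Fintype Ω] (P : Ω → ℝ) (hP0 : ∀ ω, 0 ≤ P ω) {E F : Ω → Prop}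
    (h : ∀ ω, E ω → F ω) : pr P E ≤ pr P F := by
  refine Finset.sum_le_sum fun ω _ => ?_
  by_cases hE : E ω
  · simp [hE, h ω hE]
  · by_cases hF : F ω <;> simp [hE, hF, hP0 ω]

lemma pr_congr [Fintype Ω] (P : Ω → ℝ) {E F : Ω → Prop} (h : ∀ ω, E ω ↔ F ω) :
    pr P E = pr P F :=
  Finset.sum_congr rfl fun ω _ => if_congr (h ω) rfl rfl

lemma pr_zero_of [Fintype Ω] (P : Ω → ℝ) (hP0 : ∀ ω, 0 ≤ P ω) {E : Ω → Prop}
    (hE : pr P E = 0) : ∀ ω, E ω → P ω = 0 := by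
  intro ω hω
  have := (Finset.sum_eq_zero_iff_of_nonneg (fun ω _ => by
    by_cases h : E ω <;> simp [h, hP0 ω])).1 hE ω (Finset.mem_univ ω)
  simpa [hω] using this

lemma sum_fiber [Fintype Ω] {𝒳 : Type*} [Fintype 𝒳] (X : Ω → 𝒳) (f : Ω → ℝ) :
    ∑ ω, f ω = ∑ x, ∑ ω, if X ω = x then f ω else 0 := by
  rw [Finset.sum_comm]
  exact Finset.sum_congr rfl fun ω _ => by simp

lemma ex_comp [Fintype Ω] {𝒳 : Type*} [Fintype 𝒳] (P : Ω → ℝ) (X : Ω → 𝒳)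
    (f : Ω → ℝ) (h : 𝒳 → ℝ) (hf : ∀ ω, f ω = h (X ω)) :
    ex P f = ∑ x, pr P (fun ω => X ω = x) * h x := by
  unfold ex pr
  rw [sum_fiber X (fun ω => P ω * f ω)]
  refine Finset.sum_congr rfl fun x _ => ?_
  rw [Finset.sum_mul]
  refine Finset.sum_congr rfl fun ω _ => ?_
  by_cases h1 : X ω = x <;> simp [h1, hf ω]

lemma cs_abs {𝒳 : Type*} [Fintype 𝒳] (q f h : 𝒳 → ℝ) (hq : ∀ x, 0 ≤ q x) :
    ∑ x, q x * (|f x| * |h x|) ≤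
      Real.sqrt (∑ x, q x * f x ^ 2) * Real.sqrt (∑ x, q x * h x ^ 2) := by
  have H := Real.sum_mul_le_sqrt_mul_sqrt Finset.univ
    (fun x => Real.sqrt (q x) * |f x|) (fun x => Real.sqrt (q x) * |h x|)
  have e1 : ∑ x, q x * (|f x| * |h x|)
      = ∑ x, (Real.sqrt (q x) * |f x|) * (Real.sqrt (q x) * |h x|) := by
    refine Finset.sum_congr rfl fun x _ => ?_
    rw [show (Real.sqrt (q x) * |f x|) * (Real.sqrt (q x) * |h x|)
        = (Real.sqrt (q x) * Real.sqrt (q x)) * (|f x| * |h x|) from by ring,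
      Real.mul_self_sqrt (hq x)]
  have e2 : ∀ (f : 𝒳 → ℝ), ∑ x, (Real.sqrt (q x) * |f x|) ^ 2 = ∑ x, q x * f x ^ 2 := by
    intro f
    refine Finset.sum_congr rfl fun x _ => ?_
    rw [mul_pow, Real.sq_sqrt (hq x), sq_abs]
  rw [e1, ← e2 f, ← e2 h]
  exact H

lemma bracket_bound (δ p e p₀ e₀ : ℝ) (hδ0 : 0 < δ)
    (hp1 : δ ≤ p) (hp2 : p ≤ 1 - δ) (he1 : δ ≤ e) (he2 : e ≤ 1)
    (hp₀1 : 0 ≤ p₀) (hp₀2 : p₀ ≤ 1) :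
    |(1 - p₀) - (1 - p) / (e * p) * (p₀ * e₀)| ≤ (δ * δ)⁻¹ * (|p - p₀| + |e - e₀|) := by
  have hδδ : 0 < δ * δ := by positivity
  have hep : δ * δ ≤ e * p := mul_le_mul he1 hp1 hδ0.le (hδ0.le.trans he1)
  have hep0 : 0 < e * p := hδδ.trans_le hep
  have key : (1 - p₀) - (1 - p) / (e * p) * (p₀ * e₀)
      = (e * (p - p₀) + (1 - p) * p₀ * (e - e₀)) / (e * p) := by
    have hne : e ≠ 0 := (hδ0.trans_le he1).ne'
    have hpne : p ≠ 0 := (hδ0.trans_le hp1).ne'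
    field_simp
    ring
  rw [key, abs_div, abs_of_pos hep0]
  have h1p : 0 ≤ 1 - p := by linarith
  have hnum : |e * (p - p₀) + (1 - p) * p₀ * (e - e₀)| ≤ |p - p₀| + |e - e₀| := by
    calc |e * (p - p₀) + (1 - p) * p₀ * (e - e₀)|
        ≤ |e * (p - p₀)| + |(1 - p) * p₀ * (e - e₀)| := abs_add_le _ _
      _ ≤ |p - p₀| + |e - e₀| := by
          rw [abs_mul, abs_mul]
          have he' : |e| ≤ 1 := abs_le.2 ⟨by linarith [hδ0.le.trans he1], he2⟩
          have hc : |(1 - p) * p₀| ≤ 1 := by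
            rw [abs_mul]
            have : |1 - p| ≤ 1 := abs_le.2 ⟨by linarith, by linarith⟩
            have : |p₀| ≤ 1 := abs_le.2 ⟨by linarith, hp₀2⟩
            nlinarith [abs_nonneg (1 - p), abs_nonneg p₀,
              abs_le.2 (⟨by linarith, by linarith⟩ : -1 ≤ 1 - p ∧ 1 - p ≤ 1)]
          have := abs_nonneg (p - p₀)
          have := abs_nonneg (e - e₀)
          nlinarith
  calc |e * (p - p₀) + (1 - p) * p₀ * (e - e₀)| / (e * p)
      ≤ (|p - p₀| + |e - e₀|) / (δ * δ) :=
        div_le_div₀ (by positivity) hnum hδδ hep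
    _ = (δ * δ)⁻¹ * (|p - p₀| + |e - e₀|) := by rw [div_eq_inv_mul]

lemma ite_inst_congr {α : Sort*} {b : Prop} (h1 h2 : Decidable b) (x y : α) :
    @ite _ b h1 x y = @ite _ b h2 x y := by
  cases Subsingleton.elim h1 h2; rfl

/-- Second-order bias bound for the doubly robust functional: there is a
constant C (depending only on δ and ℙ(R = false)) bounding |Φ(g, e, p) − ψ| by the
product of L²-errors of the nuisance estimators. -/
theorem doubly_robust_second_order_bias_bound
    {𝒳 𝒯 : Type*} [Fintype Ω] [Fintype 𝒳] [Fintype 𝒯]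
    (P : Ω → ℝ) (hP0 : ∀ ω, 0 ≤ P ω) (hP1 : ∑ ω, P ω = 1)
    (X : Ω → 𝒳) (A : Ω → 𝒯) (Y : Ω → ℝ) (R : Ω → Bool) (a : 𝒯)
    -- positivity
    (hposT : 0 < pr P (fun ω => R ω = false))
    (hpos : ∀ x, 0 < pr P (fun ω => X ω = x) →
      0 < pr P (fun ω => A ω = a ∧ X ω = x ∧ R ω = true))
    (δ : ℝ) (hδ0 : 0 < δ) (hδhalf : δ ≤ 1 / 2)
    -- true nuisance functions and their margin conditions on the support of X
    (p₀ e₀ g₀ : 𝒳 → ℝ)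
    (hp₀ : ∀ x, p₀ x = cpr P (fun ω => R ω = true) (fun ω => X ω = x))
    (he₀ : ∀ x, e₀ x = cpr P (fun ω => A ω = a) (fun ω => X ω = x ∧ R ω = true))
    (hg₀ : ∀ x, g₀ x = cex P Y (fun ω => X ω = x ∧ A ω = a ∧ R ω = true))
    (hp₀rng : ∀ x, 0 < pr P (fun ω => X ω = x) → δ ≤ p₀ x ∧ p₀ x ≤ 1 - δ)
    (he₀rng : ∀ x, 0 < pr P (fun ω => X ω = x) → δ ≤ e₀ x) :
    ∃ C : ℝ, ∀ g p e : 𝒳 → ℝ,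
      (∀ x, δ ≤ p x ∧ p x ≤ 1 - δ) → (∀ x, δ ≤ e x ∧ e x ≤ 1) →
      |(pr P (fun ω => R ω = false))⁻¹
          * ex P (fun ω =>
              ((1 - p (X ω)) * (if R ω = true ∧ A ω = a then (1 : ℝ) else 0)
                  / (e (X ω) * p (X ω)))
                * (Y ω - g (X ω))
              + (if R ω = false then (1 : ℝ) else 0) * g (X ω))
        - ∑ x, cpr P (fun ω => X ω = x) (fun ω => R ω = false)
            * cex P Y (fun ω => X ω = x ∧ A ω = a ∧ R ω = true)|
        ≤ C * Real.sqrt (ex P (fun ω => (g (X ω) - g₀ (X ω)) ^ 2))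
            * (Real.sqrt (ex P (fun ω => (p (X ω) - p₀ (X ω)) ^ 2))
                + Real.sqrt (ex P (fun ω => (e (X ω) - e₀ (X ω)) ^ 2))) := by
    classical
  set T := pr P (fun ω => R ω = false) with hTdef
  have hT : 0 < T := hposT
  refine ⟨T⁻¹ * (δ * δ)⁻¹, ?_⟩
  intro g p e hp he
  set K := (δ * δ)⁻¹ with hKdef
  have hK0 : 0 ≤ K := by positivity
  set q : 𝒳 → ℝ := fun x => pr P (fun ω => X ω = x) with hqdef
  set r : 𝒳 → ℝ := fun x => pr P (fun ω => X ω = x ∧ R ω = true) with hrdef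
  set s : 𝒳 → ℝ := fun x => pr P (fun ω => X ω = x ∧ A ω = a ∧ R ω = true) with hsdef
  set u : 𝒳 → ℝ := fun x => pr P (fun ω => X ω = x ∧ R ω = false) with hudef
  set m : 𝒳 → ℝ := fun x => ∑ ω, if X ω = x ∧ A ω = a ∧ R ω = true then P ω * Y ω else 0
    with hmdef
  have hq0 : ∀ x, 0 ≤ q x := fun x => pr_nonneg P hP0 _
  have hqsplit : ∀ x, q x = r x + u x := by
    intro x
    show pr P (fun ω => X ω = x)
      = pr P (fun ω => X ω = x ∧ R ω = true) + pr P (fun ω => X ω = x ∧ R ω = false)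
    unfold pr
    rw [← Finset.sum_add_distrib]
    refine Finset.sum_congr rfl fun ω _ => ?_
    by_cases h1 : X ω = x <;> cases hR : R ω <;> simp [h1, hR]
  have hPzero : ∀ x, q x = 0 → ∀ ω, X ω = x → P ω = 0 := by
    intro x hx
    exact pr_zero_of P hP0 hx
  have hm0 : ∀ x, q x = 0 → m x = 0 := by
    intro x hx
    refine Finset.sum_eq_zero fun ω _ => ?_
    by_cases h : X ω = x ∧ A ω = a ∧ R ω = true
    · simp [h, hPzero x hx ω h.1]
    · simp [h]
  have hs0 : ∀ x, q x = 0 → s x = 0 := by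
    intro x hx
    refine Finset.sum_eq_zero fun ω _ => ?_
    by_cases h : X ω = x ∧ A ω = a ∧ R ω = true
    · simp [h, hPzero x hx ω h.1]
    · simp [h]
  have hu0 : ∀ x, q x = 0 → u x = 0 := by
    intro x hx
    refine Finset.sum_eq_zero fun ω _ => ?_
    by_cases h : X ω = x ∧ R ω = false
    · simp [h, hPzero x hx ω h.1]
    · simp [h]
  -- key expectation decomposition
  have key : ex P (fun ω =>
        ((1 - p (X ω)) * (if R ω = true ∧ A ω = a then (1 : ℝ) else 0)
            / (e (X ω) * p (X ω))) * (Y ω - g (X ω))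
          + (if R ω = false then (1 : ℝ) else 0) * g (X ω))
      = ∑ x, ((1 - p x) / (e x * p x) * (m x - s x * g x) + u x * g x) := by
    show (∑ ω, P ω * (((1 - p (X ω)) * (if R ω = true ∧ A ω = a then (1 : ℝ) else 0)
            / (e (X ω) * p (X ω))) * (Y ω - g (X ω))
          + (if R ω = false then (1 : ℝ) else 0) * g (X ω))) = _
    rw [sum_fiber X (fun ω => P ω * (((1 - p (X ω)) * (if R ω = true ∧ A ω = a then (1 : ℝ) else 0)
            / (e (X ω) * p (X ω))) * (Y ω - g (X ω))
          + (if R ω = false then (1 : ℝ) else 0) * g (X ω)))]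
    refine Finset.sum_congr rfl fun x _ => ?_
    have hsplit : ∀ ω, (if X ω = x then P ω * (((1 - p (X ω)) * (if R ω = true ∧ A ω = a then (1 : ℝ) else 0)
            / (e (X ω) * p (X ω))) * (Y ω - g (X ω))
          + (if R ω = false then (1 : ℝ) else 0) * g (X ω)) else 0)
        = (1 - p x) / (e x * p x) *
            ((if X ω = x ∧ A ω = a ∧ R ω = true then P ω * Y ω else 0)
              - (if X ω = x ∧ A ω = a ∧ R ω = true then P ω else 0) * g x)
          + (if X ω = x ∧ R ω = false then P ω else 0) * g x := by
      intro ω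
      by_cases h1 : X ω = x
      · cases hR : R ω <;> by_cases h2 : A ω = a <;> simp [h1, hR, h2] <;> ring
      · simp [h1]
    rw [Finset.sum_congr rfl (fun ω _ => hsplit ω), Finset.sum_add_distrib,
      ← Finset.mul_sum, Finset.sum_sub_distrib, ← Finset.sum_mul, ← Finset.sum_mul]
    simp only [hmdef, hsdef, hudef, pr]
    congr <;> exact funext fun ω => ite_inst_congr _ _ _ _
  have hψsum : (∑ x, cpr P (fun ω => X ω = x) (fun ω => R ω = false)
        * cex P Y (fun ω => X ω = x ∧ A ω = a ∧ R ω = true))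
      = ∑ x, (u x / T) * g₀ x := by
    refine Finset.sum_congr rfl fun x _ => ?_
    rw [← hg₀ x]
    rfl
  have hexg : ex P (fun ω => (g (X ω) - g₀ (X ω)) ^ 2) = ∑ x, q x * (g x - g₀ x) ^ 2 :=
    ex_comp P X _ (fun x => (g x - g₀ x) ^ 2) (fun ω => rfl)
  have hexp : ex P (fun ω => (p (X ω) - p₀ (X ω)) ^ 2) = ∑ x, q x * (p x - p₀ x) ^ 2 :=
    ex_comp P X _ (fun x => (p x - p₀ x) ^ 2) (fun ω => rfl)
  have hexe : ex P (fun ω => (e (X ω) - e₀ (X ω)) ^ 2) = ∑ x, q x * (e x - e₀ x) ^ 2 :=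
    ex_comp P X _ (fun x => (e x - e₀ x) ^ 2) (fun ω => rfl)
  rw [key, hψsum, hexg, hexp, hexe]
  have habs : T⁻¹ * (∑ x, ((1 - p x) / (e x * p x) * (m x - s x * g x) + u x * g x))
      - ∑ x, (u x / T) * g₀ x
      = T⁻¹ * ∑ x, ((1 - p x) / (e x * p x) * (m x - s x * g x) + u x * (g x - g₀ x)) := by
    rw [Finset.mul_sum, Finset.mul_sum, ← Finset.sum_sub_distrib]
    refine Finset.sum_congr rfl fun x _ => ?_
    field_simp
    ring
  rw [habs, abs_mul, abs_of_pos (inv_pos.2 hT)]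
  -- pointwise bound
  have ht : ∀ x, |(1 - p x) / (e x * p x) * (m x - s x * g x) + u x * (g x - g₀ x)|
      ≤ K * (q x * (|g x - g₀ x| * (|p x - p₀ x| + |e x - e₀ x|))) := by
    intro x
    rcases eq_or_lt_of_le (hq0 x) with hqx | hqx
    · rw [hm0 x hqx.symm, hs0 x hqx.symm, hu0 x hqx.symm, ← hqx]
      simp
    · obtain ⟨hp₀l, hp₀u⟩ := hp₀rng x hqx
      have he₀l := he₀rng x hqx
      have hsx : 0 < s x := by
        have h := hpos x hqx
        have : pr P (fun ω => A ω = a ∧ X ω = x ∧ R ω = true)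
            = pr P (fun ω => X ω = x ∧ A ω = a ∧ R ω = true) := pr_congr P (by tauto)
        rw [this] at h
        exact h
      have hrx : 0 < r x :=
        hsx.trans_le (pr_mono P hP0 fun ω h => ⟨h.1, h.2.2⟩)
      have hr_eq : r x = q x * p₀ x := by
        have h := hp₀ x
        rw [cpr] at h
        have hnum : pr P (fun ω => R ω = true ∧ X ω = x)
            = pr P (fun ω => X ω = x ∧ R ω = true) := pr_congr P (by tauto)
        rw [hnum] at h
        rw [h]
        field_simp
        exact (mul_div_cancel_left₀ (r x) hqx.ne').symm
      have hs_eq : s x = r x * e₀ x := by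
        have h := he₀ x
        rw [cpr] at h
        have hnum : pr P (fun ω => A ω = a ∧ X ω = x ∧ R ω = true)
            = pr P (fun ω => X ω = x ∧ A ω = a ∧ R ω = true) := pr_congr P (by tauto)
        rw [hnum] at h
        rw [h]
        field_simp
        exact (mul_div_cancel_left₀ (s x) hrx.ne').symm
      have hm_eq : m x = s x * g₀ x := by
        have h := hg₀ x
        rw [cex] at h
        have hs' : pr P (fun ω => X ω = x ∧ A ω = a ∧ R ω = true) = s x := by rw [hsdef]
        rw [hs'] at h
        rw [h, mul_div_cancel₀ _ hsx.ne', hmdef]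
        beta_reduce
        exact Finset.sum_congr rfl fun ω _ => ite_inst_congr _ _ _ _
      have hu_eq : u x = q x * (1 - p₀ x) := by
        have h := hqsplit x
        rw [hr_eq] at h
        linarith
      have htx : (1 - p x) / (e x * p x) * (m x - s x * g x) + u x * (g x - g₀ x)
          = q x * ((g x - g₀ x)
              * ((1 - p₀ x) - (1 - p x) / (e x * p x) * (p₀ x * e₀ x))) := by
        rw [hm_eq, hs_eq, hr_eq, hu_eq]
        ring
      rw [htx, abs_mul, abs_mul, abs_of_pos hqx]
      have hB := bracket_bound δ (p x) (e x) (p₀ x) (e₀ x) hδ0 (hp x).1 (hp x).2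
        (he x).1 (he x).2 (hδ0.le.trans hp₀l) (by linarith)
      calc q x * (|g x - g₀ x| * |(1 - p₀ x) - (1 - p x) / (e x * p x) * (p₀ x * e₀ x)|)
          ≤ q x * (|g x - g₀ x| * (K * (|p x - p₀ x| + |e x - e₀ x|))) := by
            refine mul_le_mul_of_nonneg_left (mul_le_mul_of_nonneg_left ?_ (abs_nonneg _)) hqx.le
            exact hB
        _ = K * (q x * (|g x - g₀ x| * (|p x - p₀ x| + |e x - e₀ x|))) := by ring
  -- sum the bound and apply Cauchy-Schwarz
  have hsum : |∑ x, ((1 - p x) / (e x * p x) * (m x - s x * g x) + u x * (g x - g₀ x))|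
      ≤ K * (Real.sqrt (∑ x, q x * (g x - g₀ x) ^ 2)
          * (Real.sqrt (∑ x, q x * (p x - p₀ x) ^ 2)
            + Real.sqrt (∑ x, q x * (e x - e₀ x) ^ 2))) := by
    calc |∑ x, ((1 - p x) / (e x * p x) * (m x - s x * g x) + u x * (g x - g₀ x))|
        ≤ ∑ x, |(1 - p x) / (e x * p x) * (m x - s x * g x) + u x * (g x - g₀ x)| :=
          Finset.abs_sum_le_sum_abs _ _
      _ ≤ ∑ x, K * (q x * (|g x - g₀ x| * (|p x - p₀ x| + |e x - e₀ x|))) :=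
          Finset.sum_le_sum fun x _ => ht x
      _ = K * ((∑ x, q x * (|g x - g₀ x| * |p x - p₀ x|))
            + ∑ x, q x * (|g x - g₀ x| * |e x - e₀ x|)) := by
          rw [← Finset.mul_sum, ← Finset.sum_add_distrib]
          congr 1
          exact Finset.sum_congr rfl fun x _ => by ring
      _ ≤ K * (Real.sqrt (∑ x, q x * (g x - g₀ x) ^ 2)
              * Real.sqrt (∑ x, q x * (p x - p₀ x) ^ 2)
            + Real.sqrt (∑ x, q x * (g x - g₀ x) ^ 2)
              * Real.sqrt (∑ x, q x * (e x - e₀ x) ^ 2)) := by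
          refine mul_le_mul_of_nonneg_left (add_le_add ?_ ?_) hK0
          · exact cs_abs q _ _ hq0
          · exact cs_abs q _ _ hq0
      _ = K * (Real.sqrt (∑ x, q x * (g x - g₀ x) ^ 2)
          * (Real.sqrt (∑ x, q x * (p x - p₀ x) ^ 2)
            + Real.sqrt (∑ x, q x * (e x - e₀ x) ^ 2))) := by ring
  calc T⁻¹ * |∑ x, ((1 - p x) / (e x * p x) * (m x - s x * g x) + u x * (g x - g₀ x))|
      ≤ T⁻¹ * (K * (Real.sqrt (∑ x, q x * (g x - g₀ x) ^ 2)
          * (Real.sqrt (∑ x, q x * (p x - p₀ x) ^ 2)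
            + Real.sqrt (∑ x, q x * (e x - e₀ x) ^ 2)))) :=
        mul_le_mul_of_nonneg_left hsum (inv_nonneg.2 hT.le)
    _ = T⁻¹ * K * Real.sqrt (∑ x, q x * (g x - g₀ x) ^ 2)
          * (Real.sqrt (∑ x, q x * (p x - p₀ x) ^ 2)
            + Real.sqrt (∑ x, q x * (e x - e₀ x) ^ 2)) := by ring
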